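/- arXiv:1506.07453 — 3 statements merged into one kernel-verified Lean document; each statement's English description precedes it below -/
import Mathlib

section
/- Let ξ and η be independent identically distributed real random variables with distribution function F, and let t > 0 be such that P(|ξ| < t) ≥ 1/2. Then the symmetrized variable ξ − η satisfies E[(ξ−η)² · 1_{|ξ−η| < 2t}] ≥ E[ξ² · 1_{|ξ| < t}] − 2 (E[ξ · 1_{|ξ| < t}])². -/
open MeasureTheory ProbabilityTheory

lemma aux_integrable {Ω : Type*} [MeasureSpace Ω] [IsProbabilityMeasure (ℙ : Measure Ω)]
    {ψ : Ω → ℝ} (hm : Measurable ψ) {C : ℝ} (hb : ∀ ω, |ψ ω| ≤ C) :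
    Integrable ψ ℙ :=
  (integrable_const C).mono' hm.aestronglyMeasurable (Filter.Eventually.of_forall hb)

theorem symmetrized_truncated_second_moment_lower_bound
    {Ω : Type*} [MeasureSpace Ω] [IsProbabilityMeasure (ℙ : Measure Ω)]
    (ξ η : Ω → ℝ) (hmξ : Measurable ξ) (hmη : Measurable η)
    (hindep : IndepFun ξ η ℙ) (hid : IdentDistrib ξ η ℙ ℙ)
    (t : ℝ) (ht : 0 < t)
    (hhalf : (1 : ℝ) / 2 ≤ (ℙ {ω | |ξ ω| < t}).toReal) :
    (∫ ω, if |ξ ω| < t then (ξ ω) ^ 2 else 0) -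
        2 * (∫ ω, if |ξ ω| < t then ξ ω else 0) ^ 2 ≤
      ∫ ω, if |ξ ω - η ω| < 2 * t then (ξ ω - η ω) ^ 2 else 0 := by
  classical
  set φ2 : ℝ → ℝ := fun x => if |x| < t then x ^ 2 else 0 with hφ2def
  set φ1 : ℝ → ℝ := fun x => if |x| < t then x else 0 with hφ1def
  set φ0 : ℝ → ℝ := fun x => if |x| < t then 1 else 0 with hφ0def
  have hs : MeasurableSet {x : ℝ | |x| < t} :=
    measurableSet_lt (measurable_id.abs) measurable_const
  have hmφ2 : Measurable φ2 := Measurable.ite hs (by fun_prop) measurable_const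
  have hmφ1 : Measurable φ1 := Measurable.ite hs measurable_id measurable_const
  have hmφ0 : Measurable φ0 := Measurable.ite hs measurable_const measurable_const
  have hb2 : ∀ x, |φ2 x| ≤ t ^ 2 := by
    intro x
    simp only [hφ2def]
    split_ifs with h
    · rw [abs_pow]; exact pow_le_pow_left₀ (abs_nonneg x) h.le 2
    · simpa using pow_nonneg ht.le 2
  have hb1 : ∀ x, |φ1 x| ≤ t := by
    intro x; simp only [hφ1def]; split_ifs with h
    · exact h.le
    · simpa using ht.le
  have hb0 : ∀ x, |φ0 x| ≤ 1 := by
    intro x; simp only [hφ0def]; split_ifs <;> simp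
  have Iprod : ∀ (f g : ℝ → ℝ), Measurable f → Measurable g → ∀ (C D : ℝ),
      (∀ x, |f x| ≤ C) → (∀ x, |g x| ≤ D) →
      Integrable (fun ω => f (ξ ω) * g (η ω)) ℙ := by
    intro f g hf hg C D hC hD
    apply aux_integrable ((hf.comp hmξ).mul (hg.comp hmη)) (C := C * D)
    intro ω
    rw [Pi.mul_apply, abs_mul]
    exact mul_le_mul (hC (ξ ω)) (hD (η ω)) (abs_nonneg (g (η ω)))
      (le_trans (abs_nonneg (f (ξ ω))) (hC (ξ ω)))
  set a : ℝ := ∫ ω, φ2 (ξ ω) with ha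
  set b : ℝ := ∫ ω, φ1 (ξ ω) with hb
  set p : ℝ := (ℙ {ω | |ξ ω| < t}).toReal with hp
  have ha_nonneg : 0 ≤ a := by
    apply integral_nonneg
    intro ω; simp only [hφ2def]; split_ifs
    · positivity
    · exact le_refl 0
  have hid2 : (∫ ω, φ2 (η ω)) = a := ((hid.comp hmφ2).integral_eq).symm
  have hid1 : (∫ ω, φ1 (η ω)) = b := ((hid.comp hmφ1).integral_eq).symm
  have hsξ : MeasurableSet {ω | |ξ ω| < t} := hmξ hs
  have hp0 : (∫ ω, φ0 (ξ ω)) = p := by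
    have h2 : (fun ω => φ0 (ξ ω)) = Set.indicator {ω | |ξ ω| < t} (fun _ => (1:ℝ)) := by
      ext ω
      by_cases h : |ξ ω| < t <;> simp [hφ0def, h, Set.indicator]
    rw [h2, integral_indicator_const _ hsξ]
    simp [hp]
    rfl
  have hid0 : (∫ ω, φ0 (η ω)) = p := by
    have h3 : (∫ ω, φ0 (ξ ω)) = ∫ ω, φ0 (η ω) := (hid.comp hmφ0).integral_eq
    rw [← h3]; exact hp0
  -- independence products
  have h20 : (∫ ω, φ2 (ξ ω) * φ0 (η ω)) = a * p := by
    rw [ha, ← hid0]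
    exact (hindep.comp hmφ2 hmφ0).integral_mul_eq_mul_integral
      (hmφ2.comp hmξ).aestronglyMeasurable (hmφ0.comp hmη).aestronglyMeasurable
  have h02 : (∫ ω, φ0 (ξ ω) * φ2 (η ω)) = p * a := by
    rw [← hp0, ← hid2]
    exact (hindep.comp hmφ0 hmφ2).integral_mul_eq_mul_integral
      (hmφ0.comp hmξ).aestronglyMeasurable (hmφ2.comp hmη).aestronglyMeasurable
  have h11 : (∫ ω, φ1 (ξ ω) * φ1 (η ω)) = b * b := by
    calc (∫ ω, φ1 (ξ ω) * φ1 (η ω)) = (∫ ω, φ1 (ξ ω)) * ∫ ω, φ1 (η ω) :=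
          (hindep.comp hmφ1 hmφ1).integral_mul_eq_mul_integral
            (hmφ1.comp hmξ).aestronglyMeasurable (hmφ1.comp hmη).aestronglyMeasurable
      _ = b * b := by rw [hid1, ← hb]
  -- pointwise expansion
  have hpt : ∀ ω, (if |ξ ω| < t ∧ |η ω| < t then (ξ ω - η ω) ^ 2 else 0)
      = φ2 (ξ ω) * φ0 (η ω) + φ0 (ξ ω) * φ2 (η ω) - 2 * (φ1 (ξ ω) * φ1 (η ω)) := by
    intro ω
    by_cases h1 : |ξ ω| < t <;> by_cases h2 : |η ω| < t <;>
      simp only [hφ0def, hφ1def, hφ2def, h1, h2, if_true, if_false, true_and, false_and,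
        and_true, and_false, mul_zero, zero_mul, mul_one, one_mul, sub_zero, add_zero,
        zero_add, sub_self] <;> ring
  have P20 := Iprod φ2 φ0 hmφ2 hmφ0 _ _ hb2 hb0
  have P02 := Iprod φ0 φ2 hmφ0 hmφ2 _ _ hb0 hb2
  have P11 := Iprod φ1 φ1 hmφ1 hmφ1 _ _ hb1 hb1
  have e1 : (∫ ω, φ2 (ξ ω) * φ0 (η ω) + φ0 (ξ ω) * φ2 (η ω) - 2 * (φ1 (ξ ω) * φ1 (η ω)))
      = (∫ ω, φ2 (ξ ω) * φ0 (η ω) + φ0 (ξ ω) * φ2 (η ω))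
        - ∫ ω, 2 * (φ1 (ξ ω) * φ1 (η ω)) :=
    integral_sub (P20.add P02) (P11.const_mul 2)
  have e2 : (∫ ω, φ2 (ξ ω) * φ0 (η ω) + φ0 (ξ ω) * φ2 (η ω))
      = (∫ ω, φ2 (ξ ω) * φ0 (η ω)) + ∫ ω, φ0 (ξ ω) * φ2 (η ω) := integral_add P20 P02
  have e3 : (∫ ω, 2 * (φ1 (ξ ω) * φ1 (η ω))) = 2 * ∫ ω, φ1 (ξ ω) * φ1 (η ω) :=
    integral_const_mul 2 _
  have hmid : (∫ ω, if |ξ ω| < t ∧ |η ω| < t then (ξ ω - η ω) ^ 2 else 0)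
      = 2 * (p * a) - 2 * (b * b) := by
    rw [integral_congr_ae (Filter.Eventually.of_forall hpt), e1, e2, e3, h20, h02, h11]
    ring
  -- monotonicity step
  have hmmid : Measurable (fun ω => if |ξ ω| < t ∧ |η ω| < t then (ξ ω - η ω) ^ 2 else 0) :=
    Measurable.ite ((measurableSet_lt hmξ.abs measurable_const).inter
      (measurableSet_lt hmη.abs measurable_const)) (by fun_prop) measurable_const
  have Imid : Integrable (fun ω => if |ξ ω| < t ∧ |η ω| < t then (ξ ω - η ω) ^ 2 else 0) ℙ := by
    apply aux_integrable hmmid (C := (2*t)^2)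
    intro ω
    split_ifs with h
    · rw [abs_pow]
      apply pow_le_pow_left₀ (abs_nonneg _)
      calc |ξ ω - η ω| ≤ |ξ ω| + |η ω| := abs_sub _ _
        _ ≤ 2 * t := by linarith [h.1, h.2]
    · rw [abs_zero]; positivity
  have hmrhs : Measurable (fun ω => if |ξ ω - η ω| < 2 * t then (ξ ω - η ω) ^ 2 else 0) :=
    Measurable.ite (measurableSet_lt (hmξ.sub hmη).abs measurable_const)
      (by fun_prop) measurable_const
  have Irhs : Integrable (fun ω => if |ξ ω - η ω| < 2 * t then (ξ ω - η ω) ^ 2 else 0) ℙ := by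
    apply aux_integrable hmrhs (C := (2*t)^2)
    intro ω
    split_ifs with h
    · rw [abs_pow]; exact pow_le_pow_left₀ (abs_nonneg _) h.le 2
    · rw [abs_zero]; positivity
  have hmono : (∫ ω, if |ξ ω| < t ∧ |η ω| < t then (ξ ω - η ω) ^ 2 else 0)
      ≤ ∫ ω, if |ξ ω - η ω| < 2 * t then (ξ ω - η ω) ^ 2 else 0 := by
    apply integral_mono Imid Irhs
    intro ω
    by_cases h : |ξ ω| < t ∧ |η ω| < t
    · have h4 : |ξ ω - η ω| < 2 * t := by
        calc |ξ ω - η ω| ≤ |ξ ω| + |η ω| := abs_sub _ _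
          _ < 2 * t := by linarith [h.1, h.2]
      simp [h, h4]
    · simp only [h, if_false]
      split_ifs
      · positivity
      · exact le_refl 0
  have hgoal : a - 2 * b ^ 2 ≤ 2 * (p * a) - 2 * (b * b) := by
    nlinarith [ha_nonneg, hhalf]
  calc a - 2 * b ^ 2 ≤ 2 * (p * a) - 2 * (b * b) := hgoal
    _ = ∫ ω, if |ξ ω| < t ∧ |η ω| < t then (ξ ω - η ω) ^ 2 else 0 := hmid.symm
    _ ≤ _ := hmono
end

section
/- Let 1 ≤ p < 2. There exists an absolute constant C > 0 such that for every i.i.d. sequence ξ₁, …, ξ_k of centered square-integrable random variables and all reals a₁, …, a_k: C · ‖ξ₁‖₁ · (∑_{i=1}^k a_i²)^{1/2} ≤ ‖∑_{i=1}^k a_i ξ_i‖_p. -/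
open MeasureTheory ProbabilityTheory Finset

noncomputable def sg (b : Bool) : ℝ := if b then 1 else -1

lemma sg_sq (b : Bool) : sg b ^ 2 = 1 := by cases b <;> simp [sg]

lemma sum_cube_succ {M} [AddCommMonoid M] {k : ℕ} (F : (Fin (k+1) → Bool) → M) :
    ∑ s : Fin (k+1) → Bool, F s
      = ∑ t : Fin k → Bool, (F (Fin.cons true t) + F (Fin.cons false t)) := by
  rw [← (Fin.consEquiv (fun _ => Bool)).sum_comp F, Fintype.sum_prod_type]
  rw [Fintype.sum_bool, ← Finset.sum_add_distrib]
  rfl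

lemma cons_inner {k : ℕ} (b : Bool) (t : Fin k → Bool) (c : Fin (k+1) → ℝ) :
    ∑ i : Fin (k+1), sg ((Fin.cons b t : Fin (k+1) → Bool) i) * c i
      = sg b * c 0 + ∑ i : Fin k, sg (t i) * c i.succ := by
  rw [Fin.sum_univ_succ]; simp

lemma cube_sq (k : ℕ) (c : Fin k → ℝ) :
    ∑ s : Fin k → Bool, (∑ i, sg (s i) * c i) ^ 2 = 2 ^ k * ∑ i, c i ^ 2 := by
  induction k with
  | zero => simp
  | succ k ih =>
    rw [sum_cube_succ]
    simp only [cons_inner]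
    have h : ∀ t : Fin k → Bool,
        (sg true * c 0 + ∑ i : Fin k, sg (t i) * c i.succ) ^ 2
          + (sg false * c 0 + ∑ i : Fin k, sg (t i) * c i.succ) ^ 2
        = 2 * c 0 ^ 2 + 2 * (∑ i : Fin k, sg (t i) * c i.succ) ^ 2 := by
      intro t; simp [sg]; ring
    rw [Finset.sum_congr rfl fun t _ => h t, Finset.sum_add_distrib, Finset.sum_const,
      ← Finset.mul_sum, ih, Fin.sum_univ_succ fun i => c i ^ 2, card_univ, Fintype.card_fun]
    simp only [Fintype.card_bool, Fintype.card_fin, nsmul_eq_mul]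
    have hp : (2:ℝ) ^ (k+1) = 2 * 2 ^ k := by ring
    push_cast
    rw [hp]; ring

lemma cube_quar (k : ℕ) (c : Fin k → ℝ) :
    ∑ s : Fin k → Bool, (∑ i, sg (s i) * c i) ^ 4 ≤ 3 * 2 ^ k * (∑ i, c i ^ 2) ^ 2 := by
  induction k with
  | zero => simp
  | succ k ih =>
    rw [sum_cube_succ]
    simp only [cons_inner]
    have h : ∀ t : Fin k → Bool,
        (sg true * c 0 + ∑ i : Fin k, sg (t i) * c i.succ) ^ 4
          + (sg false * c 0 + ∑ i : Fin k, sg (t i) * c i.succ) ^ 4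
        = 2 * (∑ i : Fin k, sg (t i) * c i.succ) ^ 4
          + 12 * c 0 ^ 2 * (∑ i : Fin k, sg (t i) * c i.succ) ^ 2 + 2 * c 0 ^ 4 := by
      intro t; simp [sg]; ring
    rw [Finset.sum_congr rfl fun t _ => h t]
    rw [Finset.sum_add_distrib, Finset.sum_add_distrib, ← Finset.mul_sum, ← Finset.mul_sum,
      Finset.sum_const, cube_sq, card_univ, Fintype.card_fun]
    simp only [Fintype.card_bool, Fintype.card_fin, nsmul_eq_mul]
    rw [Fin.sum_univ_succ fun i => c i ^ 2]
    have hQ : (0:ℝ) ≤ ∑ i : Fin k, c i.succ ^ 2 :=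
      Finset.sum_nonneg fun i _ => sq_nonneg _
    push_cast
    have ih' := ih fun i => c i.succ
    have hP : (0:ℝ) ≤ 2 ^ k := le_of_lt (pow_pos (by norm_num) k)
    have h1 : (0:ℝ) ≤ 2 ^ k * (c 0 ^ 2 * ∑ i : Fin k, c i.succ ^ 2) :=
      mul_nonneg hP (mul_nonneg (sq_nonneg _) hQ)
    have h2 : (0:ℝ) ≤ 2 ^ k * c 0 ^ 4 := mul_nonneg hP (by positivity)
    have hp : (2:ℝ) ^ (k+1) = 2 * 2 ^ k := by ring
    rw [hp]
    nlinarith [ih', h1, h2]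

lemma cube_l1 (k : ℕ) (c : Fin k → ℝ) :
    2 ^ k * Real.sqrt (∑ i, c i ^ 2)
      ≤ Real.sqrt 3 * ∑ s : Fin k → Bool, |∑ i, sg (s i) * c i| := by
  classical
  set Q := ∑ i, c i ^ 2 with hQdef
  set X : (Fin k → Bool) → ℝ := fun s => ∑ i, sg (s i) * c i with hXdef
  set L := ∑ s : Fin k → Bool, |X s| with hLdef
  have hQ0 : 0 ≤ Q := Finset.sum_nonneg fun i _ => sq_nonneg _
  have hLnn : 0 ≤ L := Finset.sum_nonneg fun s _ => abs_nonneg _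
  have key : 2 ^ (2*k) * Q ≤ 3 * L ^ 2 := by
    rcases eq_or_lt_of_le hQ0 with h0 | hQpos
    · rw [← h0]; simp; positivity
    · set A := ∑ s : Fin k → Bool, X s ^ 2 with hAdef
      set M := ∑ s : Fin k → Bool, X s ^ 4 with hMdef
      set B := ∑ s : Fin k → Bool, |X s| ^ 3 with hBdef
      have hA : A = 2 ^ k * Q := cube_sq k c
      have hM4 : M ≤ 3 * 2 ^ k * Q ^ 2 := cube_quar k c
      have hCS1 : A ^ 2 ≤ L * B := by
        have h := Finset.sum_mul_sq_le_sq_mul_sq univ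
          (fun s => Real.sqrt |X s|) (fun s => |X s| * Real.sqrt |X s|)
        have e1 : ∀ s : Fin k → Bool,
            Real.sqrt |X s| * (|X s| * Real.sqrt |X s|) = X s ^ 2 := by
          intro s
          have : Real.sqrt |X s| * Real.sqrt |X s| = |X s| :=
            Real.mul_self_sqrt (abs_nonneg _)
          calc Real.sqrt |X s| * (|X s| * Real.sqrt |X s|)
              = (Real.sqrt |X s| * Real.sqrt |X s|) * |X s| := by ring
            _ = |X s| * |X s| := by rw [this]
            _ = X s ^ 2 := by rw [← sq_abs]; ring
        have e2 : ∀ s : Fin k → Bool, Real.sqrt |X s| ^ 2 = |X s| := fun s =>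
          Real.sq_sqrt (abs_nonneg _)
        have e3 : ∀ s : Fin k → Bool,
            (|X s| * Real.sqrt |X s|) ^ 2 = |X s| ^ 3 := by
          intro s
          rw [mul_pow, Real.sq_sqrt (abs_nonneg _)]; ring
        rw [Finset.sum_congr rfl fun s _ => e1 s, Finset.sum_congr rfl fun s _ => e2 s,
          Finset.sum_congr rfl fun s _ => e3 s] at h
        exact h
      have hCS2 : B ^ 2 ≤ A * M := by
        have h := Finset.sum_mul_sq_le_sq_mul_sq univ
          (fun s => |X s|) (fun s => X s ^ 2)
        have e1 : ∀ s : Fin k → Bool, |X s| * X s ^ 2 = |X s| ^ 3 := by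
          intro s; rw [← sq_abs]; ring
        have e2 : ∀ s : Fin k → Bool, |X s| ^ 2 = X s ^ 2 := fun s => sq_abs _
        have e3 : ∀ s : Fin k → Bool, (X s ^ 2) ^ 2 = X s ^ 4 := fun s => by ring
        rw [Finset.sum_congr rfl fun s _ => e1 s, Finset.sum_congr rfl fun s _ => e2 s,
          Finset.sum_congr rfl fun s _ => e3 s] at h
        exact h
      have h4 : A ^ 4 ≤ L ^ 2 * (A * M) := by
        calc A ^ 4 = (A ^ 2) ^ 2 := by ring
          _ ≤ (L * B) ^ 2 := pow_le_pow_left₀ (sq_nonneg A) hCS1 2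
          _ = L ^ 2 * B ^ 2 := by ring
          _ ≤ L ^ 2 * (A * M) := mul_le_mul_of_nonneg_left hCS2 (sq_nonneg L)
      have hApos : 0 < A := by rw [hA]; positivity
      have h3 : A ^ 3 ≤ L ^ 2 * M := by
        have := h4
        have h' : A ^ 3 * A ≤ L ^ 2 * M * A := by
          calc A ^ 3 * A = A ^ 4 := by ring
            _ ≤ L ^ 2 * (A * M) := h4
            _ = L ^ 2 * M * A := by ring
        exact le_of_mul_le_mul_right h' hApos
      have h5 : A ^ 3 ≤ L ^ 2 * (3 * 2 ^ k * Q ^ 2) :=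
        le_trans h3 (mul_le_mul_of_nonneg_left hM4 (sq_nonneg L))
      have hfac : (0:ℝ) < 2 ^ k * Q ^ 2 := by positivity
      apply le_of_mul_le_mul_right _ hfac
      calc 2 ^ (2*k) * Q * (2 ^ k * Q ^ 2) = A ^ 3 := by
            rw [hA, show (2:ℝ)^(2*k) = 2^k * 2^k from by rw [two_mul, pow_add]]; ring
        _ ≤ L ^ 2 * (3 * 2 ^ k * Q ^ 2) := h5
        _ = 3 * L ^ 2 * (2 ^ k * Q ^ 2) := by ring
  have hs := Real.sqrt_le_sqrt key
  rw [Real.sqrt_mul (by positivity) Q, Real.sqrt_mul (by norm_num) (L ^ 2),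
    Real.sqrt_sq hLnn] at hs
  have h2k : Real.sqrt (2 ^ (2*k)) = 2 ^ k := by
    rw [mul_comm 2 k, pow_mul]; exact Real.sqrt_sq (by positivity)
  rwa [h2k] at hs

lemma mp_eval {ι : Type*} [Fintype ι] {α : ι → Type*} [∀ i, MeasurableSpace (α i)]
    (μ : ∀ i, Measure (α i)) [∀ i, IsProbabilityMeasure (μ i)] (i : ι) :
    MeasurePreserving (Function.eval i) (Measure.pi μ) (μ i) := by
  classical
  refine ⟨measurable_pi_apply i, ?_⟩
  ext s hs
  rw [Measure.map_apply (measurable_pi_apply i) hs, Set.eval_preimage, Measure.pi_pi]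
  rw [Fintype.prod_eq_single i fun j hj => ?_]
  · simp
  · simp [Function.update_of_ne hj]

lemma mp_fst {α β : Type*} [MeasurableSpace α] [MeasurableSpace β] (μ : Measure α)
    (ν : Measure β) [IsProbabilityMeasure μ] [IsProbabilityMeasure ν] :
    MeasurePreserving Prod.fst (μ.prod ν) μ :=
  ⟨measurable_fst, by simp⟩

lemma mp_snd {α β : Type*} [MeasurableSpace α] [MeasurableSpace β] (μ : Measure α)
    (ν : Measure β) [IsProbabilityMeasure μ] [IsProbabilityMeasure ν] :
    MeasurePreserving Prod.snd (μ.prod ν) ν :=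
  ⟨measurable_snd, by simp⟩

lemma core (ν : Measure ℝ) [IsProbabilityMeasure ν]
    (hInt : Integrable id ν) (hmean : ∫ x, x ∂ν = 0) (k : ℕ) (a : Fin k → ℝ) :
    (∫ x, |x| ∂ν) * Real.sqrt (∑ i, a i ^ 2)
      ≤ (2 * Real.sqrt 3) * ∫ x : Fin k → ℝ, |∑ i, a i * x i| ∂(Measure.pi fun _ => ν) := by
  classical
  set κ : Measure (ℝ × ℝ) := ν.prod ν with hκ
  have hsubm : Measurable (fun z : ℝ × ℝ => z.1 - z.2) := measurable_fst.sub measurable_snd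
  set ρ : Measure ℝ := Measure.map (fun z : ℝ × ℝ => z.1 - z.2) κ with hρ
  haveI : IsProbabilityMeasure ρ := Measure.isProbabilityMeasure_map hsubm.aemeasurable
  set πν : Measure (Fin k → ℝ) := Measure.pi (fun _ => ν) with hπν
  set πκ : Measure (Fin k → ℝ × ℝ) := Measure.pi (fun _ => κ) with hπκ
  set πρ : Measure (Fin k → ℝ) := Measure.pi (fun _ => ρ) with hπρ
  -- basic integrability
  have hfst : Integrable (fun z : ℝ × ℝ => z.1) κ :=
    ((mp_fst ν ν).integrable_comp hInt.aestronglyMeasurable).mpr hInt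
  have hsnd : Integrable (fun z : ℝ × ℝ => z.2) κ :=
    ((mp_snd ν ν).integrable_comp hInt.aestronglyMeasurable).mpr hInt
  have hIntκ : Integrable (fun z : ℝ × ℝ => z.1 - z.2) κ := hfst.sub hsnd
  have hIntρ : Integrable id ρ := by
    rw [hρ, integrable_map_measure aestronglyMeasurable_id hsubm.aemeasurable]
    exact hIntκ
  have hIntρabs : Integrable (fun t : ℝ => |t|) ρ := hIntρ.abs
  set m : ℝ := ∫ t, |t| ∂ρ with hm
  set m₀ : ℝ := ∫ t, |t| ∂ν with hm₀
  have hmnn : 0 ≤ m := integral_nonneg fun t => abs_nonneg _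
  -- Step 5 : m₀ ≤ m
  have step5 : m₀ ≤ m := by
    have h1 : m = ∫ z, |z.1 - z.2| ∂κ := by
      rw [hm, hρ, integral_map hsubm.aemeasurable continuous_abs.aestronglyMeasurable]
    have h2 : (∫ z, |z.1 - z.2| ∂κ) = ∫ x, ∫ y, |x - y| ∂ν ∂ν := by
      rw [hκ]; exact integral_prod _ hIntκ.abs
    have h3 : ∀ x : ℝ, |x| ≤ ∫ y, |x - y| ∂ν := by
      intro x
      have hInt' : Integrable (fun y : ℝ => y) ν := hInt
      have : (∫ y, (x - y) ∂ν) = x := by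
        rw [integral_sub (integrable_const x) hInt']
        simp [hmean, integral_const, measure_univ]
      calc |x| = |∫ y, (x - y) ∂ν| := by rw [this]
        _ ≤ ∫ y, |x - y| ∂ν := by
            simpa [Real.norm_eq_abs] using norm_integral_le_integral_norm (fun y : ℝ => x - y) (μ := ν)
    have h4 : Integrable (fun x : ℝ => ∫ y, |x - y| ∂ν) ν := by
      have := hIntκ.abs.integral_prod_left
      simpa using this
    rw [h1, h2, hm₀]
    exact integral_mono hInt.abs h4 h3
  -- the Euclidean-valued function for Jensen
  set V : (Fin k → ℝ) → EuclideanSpace ℝ (Fin k) :=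
    fun x => (EuclideanSpace.equiv (Fin k) ℝ).symm (fun i => |a i| * |x i|) with hV
  have hVapp : ∀ x i, V x i = |a i| * |x i| := fun x i => rfl
  have hVcont : Continuous V := by
    apply (EuclideanSpace.equiv (Fin k) ℝ).symm.continuous.comp
    exact continuous_pi fun i => (continuous_const.mul ((continuous_apply i).abs))
  have hVnorm : ∀ x, ‖V x‖ = Real.sqrt (∑ i, (a i * x i) ^ 2) := by
    intro x
    rw [EuclideanSpace.norm_eq]
    congr 1
    apply Finset.sum_congr rfl
    intro i _
    rw [hVapp, Real.norm_eq_abs, abs_of_nonneg (by positivity), ← abs_mul, sq_abs]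
  -- integrability of coordinates under πρ
  have hcoord : ∀ i : Fin k, Integrable (fun x : Fin k → ℝ => x i) πρ := by
    intro i
    have := ((mp_eval (fun _ : Fin k => ρ) i).integrable_comp
      aestronglyMeasurable_id).mpr hIntρ
    simpa [Function.comp] using this
  have habs_coord : ∀ i : Fin k, Integrable (fun x : Fin k → ℝ => |x i|) πρ :=
    fun i => (hcoord i).abs
  have hgdom : Integrable (fun x : Fin k → ℝ => ∑ i, |a i| * |x i|) πρ :=
    integrable_finset_sum _ fun i _ => (habs_coord i).const_mul _
  have hVint : Integrable V πρ := by
    refine Integrable.mono' hgdom hVcont.aestronglyMeasurable (Filter.Eventually.of_forall ?_)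
    intro x
    rw [hVnorm]
    have h1 : (∑ i, (a i * x i) ^ 2) ≤ (∑ i, |a i| * |x i|) ^ 2 := by
      have := Finset.sum_sq_le_sq_sum_of_nonneg
        (f := fun i : Fin k => |a i| * |x i|) (s := univ)
        (fun i _ => by positivity)
      calc (∑ i, (a i * x i) ^ 2) = ∑ i, (|a i| * |x i|) ^ 2 := by
            apply Finset.sum_congr rfl; intro i _
            rw [← abs_mul, sq_abs]
        _ ≤ (∑ i, |a i| * |x i|) ^ 2 := this
    calc Real.sqrt (∑ i, (a i * x i) ^ 2) ≤ Real.sqrt ((∑ i, |a i| * |x i|) ^ 2) :=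
          Real.sqrt_le_sqrt h1
      _ = ∑ i, |a i| * |x i| := Real.sqrt_sq (by positivity)
  have hnormVint : Integrable (fun x => Real.sqrt (∑ i, (a i * x i) ^ 2)) πρ := by
    have := hVint.norm
    refine this.congr (Filter.Eventually.of_forall fun x => ?_)
    exact hVnorm x
  -- Step 4 : Jensen
  have hcoordint : ∀ i : Fin k, (∫ x : Fin k → ℝ, |x i| ∂πρ) = m := by
    intro i
    have hmap : Measure.map (Function.eval i) πρ = ρ := (mp_eval (fun _ : Fin k => ρ) i).map_eq
    rw [hm, ← hmap]
    exact (integral_map (μ := πρ) (φ := fun x : Fin k → ℝ => x i)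
      (measurable_pi_apply i).aemeasurable
      (f := fun t : ℝ => |t|) continuous_abs.aestronglyMeasurable).symm
  have hproj : ∀ i : Fin k, EuclideanSpace.proj (𝕜 := ℝ) i (∫ x, V x ∂πρ) = |a i| * m := by
    intro i
    rw [← ContinuousLinearMap.integral_comp_comm _ hVint]
    have : ∀ x, EuclideanSpace.proj (𝕜 := ℝ) i (V x) = |a i| * |x i| := fun x => rfl
    simp_rw [this]
    rw [integral_const_mul, hcoordint i]
  have step4 : m * Real.sqrt (∑ i, a i ^ 2)
      ≤ ∫ x, Real.sqrt (∑ i, (a i * x i) ^ 2) ∂πρ := by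
    have hnormint : ‖∫ x, V x ∂πρ‖ = m * Real.sqrt (∑ i, a i ^ 2) := by
      rw [EuclideanSpace.norm_eq]
      have : ∀ i : Fin k, ‖(∫ x, V x ∂πρ) i‖ ^ 2 = m ^ 2 * a i ^ 2 := by
        intro i
        have := hproj i
        rw [show ((∫ x, V x ∂πρ) i) = EuclideanSpace.proj (𝕜 := ℝ) i (∫ x, V x ∂πρ) from rfl,
          this, Real.norm_eq_abs, abs_of_nonneg (by positivity)]
        rw [mul_pow, sq_abs]; ring
      rw [Finset.sum_congr rfl fun i _ => this i, ← Finset.mul_sum,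
        Real.sqrt_mul (sq_nonneg m), Real.sqrt_sq hmnn]
    rw [← hnormint]
    have := norm_integral_le_integral_norm (fun x => V x) (μ := πρ)
    refine le_trans this (le_of_eq ?_)
    apply integral_congr_ae
    exact Filter.Eventually.of_forall fun x => hVnorm x
  -- measurability of the weighted sum
  have hmeasS : Measurable (fun x : Fin k → ℝ => ∑ i, a i * x i) :=
    Finset.measurable_sum _ fun i _ => (measurable_pi_apply i).const_mul _
  have hSρint : Integrable (fun x : Fin k → ℝ => ∑ i, a i * x i) πρ :=
    integrable_finset_sum _ fun i _ => (hcoord i).const_mul _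
  -- Step 2 : sign flip invariance
  have hflipmp : ∀ b : Bool, MeasurePreserving (fun t : ℝ => sg b * t) ρ ρ := by
    intro b
    cases b
    · have hneg : Measure.map (fun t : ℝ => -t) ρ = ρ := by
        rw [hρ, Measure.map_map measurable_neg hsubm]
        have hc : ((fun t : ℝ => -t) ∘ fun z : ℝ × ℝ => z.1 - z.2)
            = (fun z : ℝ × ℝ => z.1 - z.2) ∘ Prod.swap := by
          funext z; simp [Prod.swap, Function.comp]
        rw [hc, ← Measure.map_map hsubm measurable_swap, Measure.prod_swap]
      have he : (fun t : ℝ => sg false * t) = fun t : ℝ => -t := by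
        funext t; simp [sg]
      exact ⟨by rw [he]; exact measurable_neg, by rw [he]; exact hneg⟩
    · have he : (fun t : ℝ => sg true * t) = id := by
        funext t; simp [sg]
      exact ⟨by rw [he]; exact measurable_id, by rw [he]; exact Measure.map_id⟩
  have hmp_s : ∀ s : Fin k → Bool,
      MeasurePreserving (fun x : Fin k → ℝ => fun i => sg (s i) * x i) πρ πρ :=
    fun s => measurePreserving_pi _ _ (fun i => hflipmp (s i))
  have hflip : ∀ s : Fin k → Bool,
      ∫ x, |∑ i, sg (s i) * (a i * x i)| ∂πρ = ∫ x, |∑ i, a i * x i| ∂πρ := by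
    intro s
    have hsm : AEStronglyMeasurable (fun x : Fin k → ℝ => |∑ i, a i * x i|)
        (Measure.map (fun x : Fin k → ℝ => fun i => sg (s i) * x i) πρ) := by
      rw [(hmp_s s).map_eq]; exact hmeasS.abs.aestronglyMeasurable
    have h := integral_map (μ := πρ)
      (φ := fun x : Fin k → ℝ => fun i => sg (s i) * x i)
      (hmp_s s).measurable.aemeasurable
      (f := fun x : Fin k → ℝ => |∑ i, a i * x i|) hsm
    rw [(hmp_s s).map_eq] at h
    calc ∫ x, |∑ i, sg (s i) * (a i * x i)| ∂πρ
        = ∫ x, |∑ i, a i * (sg (s i) * x i)| ∂πρ := by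
          apply integral_congr_ae
          refine Filter.Eventually.of_forall fun x => ?_
          show |∑ i, sg (s i) * (a i * x i)| = |∑ i, a i * (sg (s i) * x i)|
          rw [show (∑ i, sg (s i) * (a i * x i)) = ∑ i, a i * (sg (s i) * x i) from
            Finset.sum_congr rfl fun i _ => mul_left_comm _ _ _]
      _ = ∫ x, |∑ i, a i * x i| ∂πρ := h.symm
  -- Step 3 : averaged Khintchine
  have hXsint : ∀ s : Fin k → Bool,
      Integrable (fun x : Fin k → ℝ => |∑ i, sg (s i) * (a i * x i)|) πρ := by
    intro s
    exact (integrable_finset_sum _ fun i _ => ((hcoord i).const_mul (a i)).const_mul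
      (sg (s i))).abs
  have step3 : ∫ x, Real.sqrt (∑ i, (a i * x i) ^ 2) ∂πρ
      ≤ Real.sqrt 3 * ∫ x, |∑ i, a i * x i| ∂πρ := by
    have hptw : ∀ x : Fin k → ℝ,
        (2:ℝ) ^ k * Real.sqrt (∑ i, (a i * x i) ^ 2)
          ≤ Real.sqrt 3 * ∑ s : Fin k → Bool, |∑ i, sg (s i) * (a i * x i)| :=
      fun x => cube_l1 k (fun i => a i * x i)
    have hRint : Integrable (fun x : Fin k → ℝ =>
        Real.sqrt 3 * ∑ s : Fin k → Bool, |∑ i, sg (s i) * (a i * x i)|) πρ :=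
      (integrable_finset_sum _ fun s _ => hXsint s).const_mul _
    have hLint : Integrable (fun x : Fin k → ℝ =>
        (2:ℝ) ^ k * Real.sqrt (∑ i, (a i * x i) ^ 2)) πρ := hnormVint.const_mul _
    have hle := integral_mono hLint hRint hptw
    rw [integral_const_mul, integral_const_mul, integral_finset_sum _ (fun s _ => hXsint s)]
      at hle
    rw [Finset.sum_congr rfl (fun s _ => hflip s), Finset.sum_const, card_univ,
      Fintype.card_fun, Fintype.card_bool, Fintype.card_fin, nsmul_eq_mul] at hle
    have h2k : (0:ℝ) < 2 ^ k := pow_pos (by norm_num) k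
    push_cast at hle
    calc ∫ x, Real.sqrt (∑ i, (a i * x i) ^ 2) ∂πρ
        = (2 ^ k * ∫ x, Real.sqrt (∑ i, (a i * x i) ^ 2) ∂πρ) / 2 ^ k := by
          field_simp
      _ ≤ Real.sqrt 3 * (2 ^ k * ∫ x, |∑ i, a i * x i| ∂πρ) / 2 ^ k := by
          gcongr
      _ = Real.sqrt 3 * ∫ x, |∑ i, a i * x i| ∂πρ := by field_simp
  -- Step 1 : symmetrization
  have hsubmp : MeasurePreserving
      (fun z : Fin k → ℝ × ℝ => fun i => (z i).1 - (z i).2) πκ πρ :=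
    measurePreserving_pi _ _ (fun _ => ⟨hsubm, rfl⟩)
  have hfstmp : MeasurePreserving (fun z : Fin k → ℝ × ℝ => fun i => (z i).1) πκ πν :=
    measurePreserving_pi _ _ (fun _ => mp_fst ν ν)
  have hsndmp : MeasurePreserving (fun z : Fin k → ℝ × ℝ => fun i => (z i).2) πκ πν :=
    measurePreserving_pi _ _ (fun _ => mp_snd ν ν)
  have hcoordν : ∀ i : Fin k, Integrable (fun x : Fin k → ℝ => x i) πν := by
    intro i
    have := ((mp_eval (fun _ : Fin k => ν) i).integrable_comp
      aestronglyMeasurable_id).mpr hInt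
    simpa [Function.comp] using this
  have hSνint : Integrable (fun x : Fin k → ℝ => ∑ i, a i * x i) πν :=
    integrable_finset_sum _ fun i _ => (hcoordν i).const_mul _
  have hJ : ∫ x, |∑ i, a i * x i| ∂πρ
      = ∫ z : Fin k → ℝ × ℝ, |∑ i, a i * ((z i).1 - (z i).2)| ∂πκ := by
    rw [← hsubmp.map_eq, integral_map hsubmp.measurable.aemeasurable]
    exact hmeasS.abs.aestronglyMeasurable
  have hfst_eq : ∫ z : Fin k → ℝ × ℝ, |∑ i, a i * (z i).1| ∂πκ
      = ∫ x, |∑ i, a i * x i| ∂πν := by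
    rw [← hfstmp.map_eq, integral_map hfstmp.measurable.aemeasurable]
    rw [hfstmp.map_eq]
    exact hmeasS.abs.aestronglyMeasurable
  have hsnd_eq : ∫ z : Fin k → ℝ × ℝ, |∑ i, a i * (z i).2| ∂πκ
      = ∫ x, |∑ i, a i * x i| ∂πν := by
    rw [← hsndmp.map_eq, integral_map hsndmp.measurable.aemeasurable]
    rw [hsndmp.map_eq]
    exact hmeasS.abs.aestronglyMeasurable
  have hS1κ : Integrable (fun z : Fin k → ℝ × ℝ => |∑ i, a i * (z i).1|) πκ :=
    (hfstmp.integrable_comp hmeasS.abs.aestronglyMeasurable).mpr hSνint.abs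
  have hS2κ : Integrable (fun z : Fin k → ℝ × ℝ => |∑ i, a i * (z i).2|) πκ :=
    (hsndmp.integrable_comp hmeasS.abs.aestronglyMeasurable).mpr hSνint.abs
  have hSdκ : Integrable
      (fun z : Fin k → ℝ × ℝ => |∑ i, a i * ((z i).1 - (z i).2)|) πκ :=
    (hsubmp.integrable_comp hmeasS.abs.aestronglyMeasurable).mpr hSρint.abs
  have step1 : ∫ x, |∑ i, a i * x i| ∂πρ ≤ 2 * ∫ x, |∑ i, a i * x i| ∂πν := by
    rw [hJ]
    have hb : ∀ z : Fin k → ℝ × ℝ,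
        |∑ i, a i * ((z i).1 - (z i).2)|
          ≤ |∑ i, a i * (z i).1| + |∑ i, a i * (z i).2| := by
      intro z
      have he : ∑ i, a i * ((z i).1 - (z i).2)
          = (∑ i, a i * (z i).1) - ∑ i, a i * (z i).2 := by
        rw [← Finset.sum_sub_distrib]
        exact Finset.sum_congr rfl fun i _ => by ring
      rw [he, sub_eq_add_neg]
      exact (abs_add_le _ _).trans_eq (by rw [abs_neg])
    calc ∫ z : Fin k → ℝ × ℝ, |∑ i, a i * ((z i).1 - (z i).2)| ∂πκ
        ≤ ∫ z : Fin k → ℝ × ℝ,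
            (|∑ i, a i * (z i).1| + |∑ i, a i * (z i).2|) ∂πκ :=
          integral_mono hSdκ (hS1κ.add hS2κ) hb
      _ = (∫ z : Fin k → ℝ × ℝ, |∑ i, a i * (z i).1| ∂πκ)
            + ∫ z : Fin k → ℝ × ℝ, |∑ i, a i * (z i).2| ∂πκ :=
          integral_add hS1κ hS2κ
      _ = 2 * ∫ x, |∑ i, a i * x i| ∂πν := by rw [hfst_eq, hsnd_eq]; ring
  -- assembly
  calc m₀ * Real.sqrt (∑ i, a i ^ 2)
      ≤ m * Real.sqrt (∑ i, a i ^ 2) :=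
        mul_le_mul_of_nonneg_right step5 (Real.sqrt_nonneg _)
    _ ≤ ∫ x, Real.sqrt (∑ i, (a i * x i) ^ 2) ∂πρ := step4
    _ ≤ Real.sqrt 3 * ∫ x, |∑ i, a i * x i| ∂πρ := step3
    _ ≤ Real.sqrt 3 * (2 * ∫ x, |∑ i, a i * x i| ∂πν) :=
        mul_le_mul_of_nonneg_left step1 (Real.sqrt_nonneg 3)
    _ = (2 * Real.sqrt 3) * ∫ x, |∑ i, a i * x i| ∂πν := by ring

lemma joint_law {Ω : Type} [MeasureSpace Ω] [IsProbabilityMeasure (ℙ : Measure Ω)]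
    (ξ : ℕ → Ω → ℝ) (hAE : ∀ i, AEMeasurable (ξ i) ℙ)
    (hindep : iIndepFun ξ ℙ) (k : ℕ) :
    Measure.map (fun ω (i : Fin k) => ξ i ω) ℙ
      = Measure.pi (fun i : Fin k => Measure.map (ξ (i:ℕ)) ℙ) := by
  classical
  haveI : ∀ i : Fin k, IsProbabilityMeasure (Measure.map (ξ (i:ℕ)) ℙ) :=
    fun i => Measure.isProbabilityMeasure_map (hAE i)
  have hφ : AEMeasurable (fun ω (i : Fin k) => ξ i ω) ℙ := by
    refine ⟨fun ω i => (hAE (i:ℕ)).mk _ ω, measurable_pi_lambda _ fun i => (hAE _).measurable_mk, ?_⟩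
    have h := ae_all_iff.mpr (fun i : Fin k => (hAE (i:ℕ)).ae_eq_mk)
    filter_upwards [h] with ω hω
    funext i; exact hω i
  refine (Measure.pi_eq fun s hs => ?_).symm
  rw [Measure.map_apply_of_aemeasurable hφ (MeasurableSet.univ_pi hs)]
  set sets : ℕ → Set ℝ := fun n => if h : n < k then s ⟨n, h⟩ else Set.univ with hsets
  have hpre : (fun ω (i : Fin k) => ξ i ω) ⁻¹' (Set.univ.pi s)
      = ⋂ n ∈ Finset.range k, ξ n ⁻¹' sets n := by
    ext ω
    simp only [Set.mem_preimage, Set.mem_pi, Set.mem_univ, forall_true_left, Set.mem_iInter,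
      Finset.mem_range, hsets]
    constructor
    · intro h n hn
      simpa [dif_pos hn] using h ⟨n, hn⟩
    · intro h i
      have := h i.val i.isLt
      simpa [dif_pos i.isLt] using this
  rw [hpre, hindep.measure_inter_preimage_eq_mul (Finset.range k)
    (sets := sets) (fun n hn => ?_)]
  · rw [← Fin.prod_univ_eq_prod_range (fun n => ℙ (ξ n ⁻¹' sets n)) k]
    apply Finset.prod_congr rfl
    intro i _
    rw [Measure.map_apply_of_aemeasurable (hAE _) (hs i), hsets]
    simp [dif_pos i.isLt]
  · by_cases h : n < k
    · simpa [hsets, dif_pos h] using hs ⟨n, h⟩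
    · simp [hsets, dif_neg h]

lemma aem_fun {Ω : Type} [MeasureSpace Ω] (ξ : ℕ → Ω → ℝ)
    (hAE : ∀ i, AEMeasurable (ξ i) ℙ) (k : ℕ) :
    AEMeasurable (fun ω (i : Fin k) => ξ i ω) ℙ := by
  refine ⟨fun ω i => (hAE (i:ℕ)).mk _ ω,
    measurable_pi_lambda _ fun i => (hAE _).measurable_mk, ?_⟩
  have h := MeasureTheory.ae_all_iff.mpr (fun i : Fin k => (hAE (i:ℕ)).ae_eq_mk)
  filter_upwards [h] with ω hω
  funext i; exact hω i

theorem marcinkiewicz_zygmund_lower_bound :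
    ∃ C : ℝ, 0 < C ∧
      ∀ (p : ℝ), 1 ≤ p → p < 2 →
      ∀ (Ω : Type) [MeasureSpace Ω] [IsProbabilityMeasure (ℙ : Measure Ω)]
        (ξ : ℕ → Ω → ℝ),
        iIndepFun ξ ℙ →
        (∀ i, IdentDistrib (ξ i) (ξ 0) ℙ ℙ) →
        (∫ ω, ξ 0 ω) = 0 →
        MemLp (ξ 0) 2 ℙ →
        ∀ (k : ℕ) (a : ℕ → ℝ),
          C * (eLpNorm (ξ 0) 1 ℙ).toReal * Real.sqrt (∑ i ∈ Finset.range k, (a i) ^ 2) ≤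
            (eLpNorm (fun ω => ∑ i ∈ Finset.range k, a i * ξ i ω) (ENNReal.ofReal p) ℙ).toReal := by
  refine ⟨4⁻¹, by norm_num, ?_⟩
  intro p hp1 hp2 Ω _ _ ξ hindep hident hmean hL2 k a
  have hAE : ∀ i, AEMeasurable (ξ i) ℙ := fun i => (hident i).aemeasurable_fst
  set μ : Measure ℝ := Measure.map (ξ 0) ℙ with hμ
  haveI : IsProbabilityMeasure μ := Measure.isProbabilityMeasure_map (hAE 0)
  have hmap : ∀ i, Measure.map (ξ i) ℙ = μ := fun i => (hident i).map_eq
  have hInt0 : Integrable (ξ 0) ℙ :=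
    memLp_one_iff_integrable.mp (hL2.mono_exponent (by norm_num))
  have hμInt : Integrable id μ := by
    rw [hμ, integrable_map_measure aestronglyMeasurable_id (hAE 0)]
    exact hInt0
  have hμmean : ∫ x, x ∂μ = 0 := by
    rw [hμ]
    have h := integral_map (φ := ξ 0) (hAE 0) (f := fun x : ℝ => x) aestronglyMeasurable_id
    rw [h]; exact hmean
  set f : Ω → ℝ := fun ω => ∑ i ∈ Finset.range k, a i * ξ i ω with hf
  have hf2 : MemLp f 2 ℙ :=
    memLp_finset_sum _ fun i _ => ((hident i).symm.memLp_snd hL2).const_mul (a i)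
  have hofp2 : ENNReal.ofReal p ≤ 2 := by
    calc ENNReal.ofReal p ≤ ENNReal.ofReal 2 := ENNReal.ofReal_le_ofReal hp2.le
      _ = 2 := by simp
  have hfp : MemLp f (ENNReal.ofReal p) ℙ := hf2.mono_exponent hofp2
  have h1p : (1 : ENNReal) ≤ ENNReal.ofReal p := by
    rw [← ENNReal.ofReal_one]; exact ENNReal.ofReal_le_ofReal hp1
  have htoReal : (eLpNorm f 1 ℙ).toReal ≤ (eLpNorm f (ENNReal.ofReal p) ℙ).toReal :=
    ENNReal.toReal_mono hfp.eLpNorm_ne_top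
      (eLpNorm_le_eLpNorm_of_exponent_le h1p hf2.aestronglyMeasurable)
  have h1eq : (eLpNorm f 1 ℙ).toReal = ∫ ω, |f ω| ∂ℙ := by
    rw [eLpNorm_one_eq_lintegral_enorm,
      ← integral_norm_eq_lintegral_enorm hf2.aestronglyMeasurable]
    simp [Real.norm_eq_abs]
  have hξeq : (eLpNorm (ξ 0) 1 ℙ).toReal = ∫ ω, |ξ 0 ω| ∂ℙ := by
    rw [eLpNorm_one_eq_lintegral_enorm,
      ← integral_norm_eq_lintegral_enorm hInt0.aestronglyMeasurable]
    simp [Real.norm_eq_abs]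
  have hm₀ : ∫ ω, |ξ 0 ω| ∂ℙ = ∫ x, |x| ∂μ :=
    (integral_map (hAE 0) continuous_abs.aestronglyMeasurable).symm
  have hjl : Measure.map (fun ω (i : Fin k) => ξ i ω) ℙ = Measure.pi (fun _ : Fin k => μ) := by
    rw [joint_law ξ hAE hindep k]
    have h : (fun i : Fin k => Measure.map (ξ (i:ℕ)) ℙ) = fun _ : Fin k => μ :=
      funext fun i => hmap i
    rw [h]
  have hmeasS : Measurable (fun x : Fin k → ℝ => ∑ i : Fin k, a (i:ℕ) * x i) :=
    Finset.measurable_sum _ fun i _ => (measurable_pi_apply i).const_mul _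
  have hintegral_eq : ∫ x : Fin k → ℝ, |∑ i : Fin k, a (i:ℕ) * x i|
        ∂(Measure.pi fun _ : Fin k => μ)
      = ∫ ω, |f ω| ∂ℙ := by
    rw [← hjl, integral_map (aem_fun ξ hAE k) hmeasS.abs.aestronglyMeasurable]
    apply integral_congr_ae
    refine Filter.Eventually.of_forall fun ω => ?_
    show |∑ i : Fin k, a (i:ℕ) * ξ (i:ℕ) ω| = |f ω|
    rw [hf, Fin.sum_univ_eq_sum_range (fun n => a n * ξ n ω) k]
  have hcore := core μ hμInt hμmean k (fun i => a (i:ℕ))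
  have hQ : Real.sqrt (∑ i ∈ Finset.range k, a i ^ 2)
      = Real.sqrt (∑ i : Fin k, a (i:ℕ) ^ 2) := by
    rw [Fin.sum_univ_eq_sum_range (fun n => a n ^ 2) k]
  set R := (eLpNorm f (ENNReal.ofReal p) ℙ).toReal with hR
  have hRnn : 0 ≤ R := ENNReal.toReal_nonneg
  have hIR : ∫ x : Fin k → ℝ, |∑ i : Fin k, a (i:ℕ) * x i|
      ∂(Measure.pi fun _ : Fin k => μ) ≤ R := by
    rw [hintegral_eq, ← h1eq]; exact htoReal
  have hsqrt3 : Real.sqrt 3 ≤ 2 := by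
    rw [show (2:ℝ) = Real.sqrt (2^2) from (Real.sqrt_sq (by norm_num)).symm]
    exact Real.sqrt_le_sqrt (by norm_num)
  have hkey : (∫ x, |x| ∂μ) * Real.sqrt (∑ i : Fin k, a (i:ℕ) ^ 2) ≤ 2 * Real.sqrt 3 * R := by
    refine hcore.trans ?_
    have h3 : (0:ℝ) ≤ 2 * Real.sqrt 3 := by positivity
    exact mul_le_mul_of_nonneg_left hIR h3
  rw [hξeq, hm₀, hQ]
  have hmQnn : 0 ≤ (∫ x, |x| ∂μ) * Real.sqrt (∑ i : Fin k, a (i:ℕ) ^ 2) := by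
    apply mul_nonneg (integral_nonneg fun t => abs_nonneg _) (Real.sqrt_nonneg _)
  have h24 : 2 * Real.sqrt 3 * R ≤ 4 * R := by nlinarith
  linarith [hkey, h24]
end

section
/- Let 1 ≤ p < 2 and let S be the set of mean-zero, finite-variance probability measures on ℝ with the quantile-L² metric d. For ν, λ ∈ S, i.i.d. sequences (ξ_k^{(ν)}), (ξ_k^{(λ)}) with respective laws ν and λ, any n ≥ 1, real t, a₁,…,a_n: | ‖t + ∑_{k=1}^n a_k ξ_k^{(ν)}‖_p − ‖t + ∑_{k=1}^n a_k ξ_k^{(λ)}‖_p | ≤ d(ν,λ) · (∑_{k=1}^n a_k²)^{1/2}. -/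
open MeasureTheory ProbabilityTheory

/-- The quantile function (generalized inverse of the distribution function) of a
probability measure on `ℝ`. -/
noncomputable def quantile (ν : Measure ℝ) (x : ℝ) : ℝ :=
  sInf {t : ℝ | x ≤ (ν (Set.Iic t)).toReal}

/-- The quantile-`L²` distance between two probability measures on `ℝ`. -/
noncomputable def qdist (ν lam : Measure ℝ) : ℝ :=
  Real.sqrt (∫ x in Set.Ioo (0 : ℝ) 1, (quantile ν x - quantile lam x) ^ 2)

open scoped ENNReal NNReal

section Aux

open Set Filter Topology

noncomputable def unif : Measure ℝ := volume.restrict (Set.Ioo 0 1)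

instance : IsProbabilityMeasure unif := by
  constructor
  rw [unif, Measure.restrict_apply_univ, Real.volume_Ioo]
  norm_num

lemma quantile_le_iff {ν : Measure ℝ} [IsProbabilityMeasure ν] {x t : ℝ}
    (hx0 : 0 < x) (hx1 : x < 1) :
    quantile ν x ≤ t ↔ x ≤ cdf ν t := by
  have hset : {s : ℝ | x ≤ (ν (Set.Iic s)).toReal} = {s : ℝ | x ≤ cdf ν s} := by
    simp only [cdf_eq_real, measureReal_def]
  have hne : {s : ℝ | x ≤ cdf ν s}.Nonempty := by
    obtain ⟨s, hs⟩ := ((tendsto_cdf_atTop (μ := ν)).eventually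
      (eventually_gt_nhds hx1)).exists
    exact ⟨s, hs.le⟩
  have hbdd : BddBelow {s : ℝ | x ≤ cdf ν s} := by
    obtain ⟨s₀, hs₀⟩ := ((tendsto_cdf_atBot (μ := ν)).eventually
      (eventually_lt_nhds hx0)).exists
    refine ⟨s₀, fun s hs => ?_⟩
    by_contra hlt
    push_neg at hlt
    exact absurd (le_trans hs (monotone_cdf ν hlt.le)) (not_le.2 hs₀)
  rw [quantile, hset]
  constructor
  · intro h
    have hcont : Tendsto (cdf ν) (𝓝[>] t) (𝓝 (cdf ν t)) :=
      ((cdf ν).right_continuous t).mono_left (nhdsWithin_mono _ Ioi_subset_Ici_self)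
    refine ge_of_tendsto hcont ?_
    filter_upwards [self_mem_nhdsWithin] with s hs
    obtain ⟨u, hu, hus⟩ := exists_lt_of_csInf_lt hne (lt_of_le_of_lt h hs)
    exact le_trans hu (monotone_cdf ν hus.le)
  · intro h
    exact csInf_le hbdd h

noncomputable def mq (ν : Measure ℝ) : ℝ → ℝ := (Set.Ioo (0:ℝ) 1).indicator (quantile ν)

lemma mq_preimage_Iic (ν : Measure ℝ) [IsProbabilityMeasure ν] (r : ℝ) :
    mq ν ⁻¹' Iic r =
      (Ioo (0:ℝ) 1 ∩ Iic (cdf ν r)) ∪ ((Ioo (0:ℝ) 1)ᶜ ∩ {_y : ℝ | (0:ℝ) ≤ r}) := by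
  ext y
  by_cases hy : y ∈ Ioo (0:ℝ) 1
  · simp only [mem_preimage, mem_Iic, mq, indicator_of_mem hy, mem_union, mem_inter_iff, hy,
      true_and, mem_compl_iff, not_true_eq_false, false_and, or_false]
    exact (quantile_le_iff hy.1 hy.2).trans (by rfl)
  · simp [mq, indicator_of_notMem hy, hy]

lemma measurable_mq (ν : Measure ℝ) [IsProbabilityMeasure ν] : Measurable (mq ν) := by
  refine measurable_of_Iic fun r => ?_
  rw [mq_preimage_Iic]
  exact (measurableSet_Ioo.inter measurableSet_Iic).union
    (measurableSet_Ioo.compl.inter (MeasurableSet.const _))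

lemma map_mq (ν : Measure ℝ) [IsProbabilityMeasure ν] :
    Measure.map (mq ν) unif = ν := by
  refine Measure.ext_of_Iic _ _ fun r => ?_
  rw [Measure.map_apply (measurable_mq ν) measurableSet_Iic, mq_preimage_Iic, unif,
    Measure.restrict_apply ((measurableSet_Ioo.inter measurableSet_Iic).union
      (measurableSet_Ioo.compl.inter (MeasurableSet.const _)))]
  have hcap : ((Ioo (0:ℝ) 1 ∩ Iic (cdf ν r)) ∪ ((Ioo (0:ℝ) 1)ᶜ ∩ {_y : ℝ | (0:ℝ) ≤ r}))
      ∩ Ioo (0:ℝ) 1 = Ioo (0:ℝ) 1 ∩ Iic (cdf ν r) := by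
    ext y
    constructor
    · rintro ⟨(h | h), hy⟩
      · exact h
      · exact absurd hy h.1
    · exact fun h => ⟨Or.inl h, h.1⟩
  rw [hcap]
  have h0 : (0:ℝ) ≤ cdf ν r := cdf_nonneg ν r
  have h1 : cdf ν r ≤ 1 := cdf_le_one ν r
  have hle : volume (Ioo (0:ℝ) 1 ∩ Iic (cdf ν r)) ≤ ENNReal.ofReal (cdf ν r) := by
    refine le_trans (measure_mono (fun y hy => ?_)) (le_of_eq (by rw [Real.volume_Ioc, sub_zero]))
    exact mem_Ioc.2 ⟨hy.1.1, hy.2⟩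
  have hge : ENNReal.ofReal (cdf ν r) ≤ volume (Ioo (0:ℝ) 1 ∩ Iic (cdf ν r)) := by
    refine le_trans (le_of_eq (by rw [Real.volume_Ioo, sub_zero]))
      (measure_mono (fun y hy => ?_))
    exact ⟨⟨hy.1, lt_of_lt_of_le hy.2 h1⟩, hy.2.le⟩
  rw [le_antisymm hle hge, ofReal_cdf]

section PiLemmas

variable {n : ℕ} (μ : Measure ℝ) [IsProbabilityMeasure μ]

lemma pi_eval_preimage (i : Fin n) (s : Set ℝ) :
    Measure.pi (fun _ : Fin n => μ) (Function.eval i ⁻¹' s) = μ s := by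
  rw [Set.eval_preimage, Measure.pi_pi]
  rw [Finset.prod_eq_single i (fun j _ hj => by
    simp [Function.update_apply, hj]) (by simp)]
  simp

lemma map_eval_pi' (i : Fin n) :
    Measure.map (Function.eval i) (Measure.pi (fun _ : Fin n => μ)) = μ := by
  refine Measure.ext fun s hs => ?_
  rw [Measure.map_apply (measurable_pi_apply i) hs, pi_eval_preimage]

lemma iIndepFun_eval :
    iIndepFun (fun i (v : Fin n → ℝ) => v i)
      (Measure.pi fun _ : Fin n => μ) := by
  rw [iIndepFun_iff_measure_inter_preimage_eq_mul]
  intro S sets hsets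
  have h1 : (⋂ i ∈ S, (fun v : Fin n → ℝ => v i) ⁻¹' sets i)
      = Set.pi univ (fun i => if i ∈ S then sets i else univ) := by
    ext v
    simp only [mem_iInter, mem_preimage, Set.mem_pi, mem_univ, true_implies]
    constructor
    · intro h i
      by_cases hi : i ∈ S
      · simpa [hi] using h i hi
      · simp [hi]
    · intro h i hi
      have := h i
      simpa [hi] using this
  rw [h1, Measure.pi_pi]
  have h2 : ∀ i : Fin n, μ (if i ∈ S then sets i else univ)
      = if i ∈ S then μ (sets i) else 1 := by
    intro i; split <;> simp
  simp_rw [h2]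
  rw [Finset.prod_ite_mem, Finset.univ_inter]
  exact Finset.prod_congr rfl fun i hi => (pi_eval_preimage μ i (sets i)).symm

end PiLemmas

lemma iIndepFun_precomp {ι ι' Ω : Type*} [MeasurableSpace Ω] {μ : Measure Ω}
    (g : ι' → ι) (hg : Function.Injective g) (f : ι → Ω → ℝ)
    (h : iIndepFun f μ) :
    iIndepFun (fun i => f (g i)) μ := by
  classical
  rw [iIndepFun_iff_measure_inter_preimage_eq_mul] at h ⊢
  intro S' sets' hsets'
  set sets : ι → Set ℝ := fun j =>
    if hj : ∃ i ∈ S', g i = j then sets' hj.choose else univ with hsets_def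
  have key : ∀ i ∈ S', sets (g i) = sets' i := by
    intro i hi
    have hj : ∃ i' ∈ S', g i' = g i := ⟨i, hi, rfl⟩
    have := hj.choose_spec
    have hichoose : hj.choose = i := hg this.2
    simp only [hsets_def, dif_pos hj, hichoose]
  have hmeas : ∀ j ∈ S'.image g, MeasurableSet (sets j) := by
    intro j hj
    obtain ⟨i, hi, rfl⟩ := Finset.mem_image.1 hj
    rw [key i hi]
    exact hsets' i hi
  have := h (S'.image g) hmeas
  have hInter : (⋂ j ∈ S'.image g, f j ⁻¹' sets j)
      = ⋂ i ∈ S', f (g i) ⁻¹' sets' i := by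
    ext ω
    simp only [mem_iInter, Finset.mem_image]
    constructor
    · intro hmem i hi
      have := hmem (g i) ⟨i, hi, rfl⟩
      rwa [key i hi] at this
    · rintro hmem j ⟨i, hi, rfl⟩
      rw [key i hi]
      exact hmem i hi
  have hProd : ∏ j ∈ S'.image g, μ (f j ⁻¹' sets j)
      = ∏ i ∈ S', μ (f (g i) ⁻¹' sets' i) := by
    rw [Finset.prod_image (fun i _ j _ hij => hg hij)]
    exact Finset.prod_congr rfl fun i hi => by rw [key i hi]
  rw [hInter, hProd] at this
  exact this

lemma identDistrib_finset_sum {Ω Ω' ι : Type*} [MeasurableSpace Ω] [MeasurableSpace Ω']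
    {μ : Measure Ω} {μ' : Measure Ω'} [IsProbabilityMeasure μ] [IsProbabilityMeasure μ']
    (X : ι → Ω → ℝ) (Y : ι → Ω' → ℝ)
    (hXm : ∀ i, Measurable (X i)) (hYm : ∀ i, Measurable (Y i))
    (hX : iIndepFun X μ)
    (hY : iIndepFun Y μ')
    (hid : ∀ i, IdentDistrib (X i) (Y i) μ μ') (s : Finset ι) :
    IdentDistrib (fun ω => ∑ i ∈ s, X i ω) (fun ω => ∑ i ∈ s, Y i ω) μ μ' := by
  classical
  induction s using Finset.induction_on with
  | empty =>
      simp only [Finset.sum_empty]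
      exact ⟨aemeasurable_const, aemeasurable_const, by
        rw [Measure.map_const, Measure.map_const, measure_univ, measure_univ]⟩
  | @insert a s ha ih =>
      have hsumXm : Measurable (fun ω => ∑ i ∈ s, X i ω) := by
        exact Finset.measurable_sum s fun i _ => hXm i
      have hsumYm : Measurable (fun ω => ∑ i ∈ s, Y i ω) := by
        exact Finset.measurable_sum s fun i _ => hYm i
      have hXfun : (∑ j ∈ s, X j) = fun ω => ∑ j ∈ s, X j ω :=
        funext fun ω => Finset.sum_apply ω s X
      have hYfun : (∑ j ∈ s, Y j) = fun ω => ∑ j ∈ s, Y j ω :=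
        funext fun ω => Finset.sum_apply ω s Y
      have hindX : IndepFun (∑ j ∈ s, X j) (X a) μ :=
        hX.indepFun_finset_sum_of_notMem hXm ha
      have hindY : IndepFun (∑ j ∈ s, Y j) (Y a) μ' :=
        hY.indepFun_finset_sum_of_notMem hYm ha
      rw [hXfun] at hindX
      rw [hYfun] at hindY
      have hmapX := (indepFun_iff_map_prod_eq_prod_map_map hsumXm.aemeasurable
        (hXm a).aemeasurable).1 hindX
      have hmapY := (indepFun_iff_map_prod_eq_prod_map_map hsumYm.aemeasurable
        (hYm a).aemeasurable).1 hindY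
      have hpair : IdentDistrib (fun ω => ((∑ i ∈ s, X i ω), X a ω))
          (fun ω => ((∑ i ∈ s, Y i ω), Y a ω)) μ μ' := by
        refine ⟨(hsumXm.prodMk (hXm a)).aemeasurable,
          (hsumYm.prodMk (hYm a)).aemeasurable, ?_⟩
        rw [hmapX, hmapY, ih.map_eq, (hid a).map_eq]
      have := hpair.comp (u := fun q : ℝ × ℝ => q.2 + q.1)
        (measurable_snd.add measurable_fst)
      simp only [Finset.sum_insert ha]
      exact this

lemma abs_toReal_eLpNorm_sub_le {α : Type*} [MeasurableSpace α] {μ : Measure α}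
    {f g : α → ℝ} {q : ℝ≥0∞} (hq : 1 ≤ q) (hf : MemLp f q μ) (hg : MemLp g q μ) :
    |(eLpNorm f q μ).toReal - (eLpNorm g q μ).toReal|
      ≤ (eLpNorm (fun x => f x - g x) q μ).toReal := by
  haveI : Fact (1 ≤ q) := ⟨hq⟩
  have h1 : ‖hf.toLp f‖ = (eLpNorm f q μ).toReal := Lp.norm_toLp f hf
  have h2 : ‖hg.toLp g‖ = (eLpNorm g q μ).toReal := Lp.norm_toLp g hg
  have h3 : hf.toLp f - hg.toLp g = (hf.sub hg).toLp (f - g) := MemLp.toLp_sub hf hg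
  have h4 : ‖(hf.sub hg).toLp (f - g)‖ = (eLpNorm (f - g) q μ).toReal :=
    Lp.norm_toLp (f - g) (hf.sub hg)
  calc |(eLpNorm f q μ).toReal - (eLpNorm g q μ).toReal|
      = |‖hf.toLp f‖ - ‖hg.toLp g‖| := by rw [h1, h2]
    _ ≤ ‖hf.toLp f - hg.toLp g‖ := abs_norm_sub_norm_le _ _
    _ = (eLpNorm (fun x => f x - g x) q μ).toReal := by rw [h3, h4]; rfl

lemma toReal_eLpNorm_two_eq {α : Type*} [MeasurableSpace α] {μ : Measure α}
    [IsProbabilityMeasure μ] {f : α → ℝ} (h0 : ∫ x, f x ∂μ = 0) :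
    (eLpNorm f 2 μ).toReal = Real.sqrt (variance f μ) := by
  have hev : evariance f μ = ∫⁻ ω, (‖f ω‖₊ : ℝ≥0∞) ^ 2 ∂μ := by
    rw [evariance]
    congr 1
    ext ω
    rw [h0, sub_zero]; rfl
  have helip : eLpNorm f 2 μ = (evariance f μ) ^ (1 / (2:ℝ)) := by
    rw [eLpNorm_eq_lintegral_rpow_enorm_toReal two_ne_zero ENNReal.ofNat_ne_top, hev]
    simp only [ENNReal.toReal_ofNat]
    congr 1
    refine lintegral_congr fun ω => ?_
    exact ENNReal.rpow_two _
  rw [helip, ← ENNReal.toReal_rpow, Real.sqrt_eq_rpow, variance]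

lemma integral_eval_pi {n : ℕ} (μ : Measure ℝ) [IsProbabilityMeasure μ] (i : Fin n)
    {h : ℝ → ℝ} (hm : Measurable h) :
    ∫ v : Fin n → ℝ, h (v i) ∂(Measure.pi fun _ : Fin n => μ) = ∫ x, h x ∂μ := by
  have hmap := map_eval_pi' μ i
  conv_rhs => rw [← hmap]
  exact (integral_map (measurable_pi_apply i).aemeasurable
    (by rw [hmap]; exact hm.aestronglyMeasurable)).symm

lemma memℒp_eval_pi {n : ℕ} (μ : Measure ℝ) [IsProbabilityMeasure μ] (i : Fin n)
    {h : ℝ → ℝ} (hmem : MemLp h 2 μ) :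
    MemLp (fun v : Fin n → ℝ => h (v i)) 2 (Measure.pi fun _ : Fin n => μ) := by
  have hmem' : MemLp h 2 (Measure.map (Function.eval i) (Measure.pi fun _ : Fin n => μ)) := by
    rw [map_eval_pi']; exact hmem
  exact (memLp_map_measure_iff hmem'.1 (measurable_pi_apply i).aemeasurable).1 hmem'

lemma unif_def : unif = volume.restrict (Set.Ioo (0:ℝ) 1) := rfl

lemma law_transfer {Ω : Type*} [MeasureSpace Ω] [IsProbabilityMeasure (ℙ : Measure Ω)]
    (ν : Measure ℝ) [IsProbabilityMeasure ν]
    (ξ : ℕ → Ω → ℝ) (hmξ : ∀ k, Measurable (ξ k))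
    (hξindep : iIndepFun ξ ℙ)
    (hξlaw : ∀ k, Measure.map (ξ k) ℙ = ν) (n : ℕ) (t : ℝ) (a : ℕ → ℝ) :
    IdentDistrib (fun ω => t + ∑ k ∈ Finset.range n, a k * ξ k ω)
      (fun v : Fin n → ℝ => t + ∑ i : Fin n, a (i:ℕ) * mq ν (v i)) ℙ
      (Measure.pi fun _ : Fin n => unif) := by
  set P : Measure (Fin n → ℝ) := Measure.pi fun _ : Fin n => unif with hP_def
  set famX : Fin n → Ω → ℝ := fun i ω => a (i:ℕ) * ξ (i:ℕ) ω with hfamX_def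
  set famY : Fin n → (Fin n → ℝ) → ℝ := fun i v => a (i:ℕ) * mq ν (v i) with hfamY_def
  have hXm : ∀ i, Measurable (famX i) := fun i => (hmξ _).const_mul _
  have hYm : ∀ i, Measurable (famY i) :=
    fun i => ((measurable_mq ν).comp (measurable_pi_apply i)).const_mul _
  have hXind : iIndepFun famX ℙ := by
    have h1 := iIndepFun_precomp (fun i : Fin n => (i:ℕ)) Fin.val_injective ξ hξindep
    exact h1.comp (fun i x => a (i:ℕ) * x) (fun i => measurable_id.const_mul _)
  have hYind : iIndepFun famY P :=
    (iIndepFun_eval unif).comp (fun i x => a (i:ℕ) * mq ν x)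
      (fun i => (measurable_mq ν).const_mul _)
  have hid : ∀ i, IdentDistrib (famX i) (famY i) ℙ P := by
    intro i
    have hbase : IdentDistrib (ξ (i:ℕ)) (fun v : Fin n → ℝ => mq ν (v i)) ℙ P := by
      refine ⟨(hmξ _).aemeasurable,
        ((measurable_mq ν).comp (measurable_pi_apply i)).aemeasurable, ?_⟩
      rw [hξlaw]
      have heq : (fun v : Fin n → ℝ => mq ν (v i)) = (mq ν) ∘ (Function.eval i) := rfl
      rw [heq, ← Measure.map_map (measurable_mq ν) (measurable_pi_apply i), map_eval_pi',
        map_mq]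
    exact hbase.comp (measurable_id.const_mul (a (i:ℕ)))
  have hsum := identDistrib_finset_sum famX famY hXm hYm hXind hYind hid Finset.univ
  have hfinal := hsum.comp (u := fun x : ℝ => t + x) (measurable_id.const_add t)
  have hL : (fun ω => t + ∑ k ∈ Finset.range n, a k * ξ k ω)
      = fun ω => t + ∑ i : Fin n, famX i ω := by
    funext ω
    rw [← Fin.sum_univ_eq_sum_range (fun k => a k * ξ k ω) n]
  rw [hL]
  exact hfinal

end Aux

open Set in
theorem equicontinuity_of_lp_norms_in_law
    {Ω Ω' : Type*} [MeasureSpace Ω] [IsProbabilityMeasure (ℙ : Measure Ω)]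
    [MeasureSpace Ω'] [IsProbabilityMeasure (ℙ : Measure Ω')]
    (p : ℝ) (hp1 : 1 ≤ p) (hp2 : p < 2)
    (ν lam : Measure ℝ) [IsProbabilityMeasure ν] [IsProbabilityMeasure lam]
    (hν0 : (∫ x, x ∂ν) = 0) (hlam0 : (∫ x, x ∂lam) = 0)
    (hν2 : Integrable (fun x : ℝ => x ^ 2) ν)
    (hlam2 : Integrable (fun x : ℝ => x ^ 2) lam)
    (ξ : ℕ → Ω → ℝ) (ξ' : ℕ → Ω' → ℝ)
    (hmξ : ∀ k, Measurable (ξ k)) (hmξ' : ∀ k, Measurable (ξ' k))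
    (hξindep : iIndepFun ξ ℙ)
    (hξ'indep : iIndepFun ξ' ℙ)
    (hξlaw : ∀ k, Measure.map (ξ k) ℙ = ν)
    (hξ'law : ∀ k, Measure.map (ξ' k) ℙ = lam)
    (n : ℕ) (t : ℝ) (a : ℕ → ℝ) :
    |(eLpNorm (fun ω => t + ∑ k ∈ Finset.range n, a k * ξ k ω)
        (ENNReal.ofReal p) ℙ).toReal -
      (eLpNorm (fun ω => t + ∑ k ∈ Finset.range n, a k * ξ' k ω)
        (ENNReal.ofReal p) ℙ).toReal| ≤
      qdist ν lam * Real.sqrt (∑ k ∈ Finset.range n, (a k) ^ 2) := by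
  classical
  set q : ℝ≥0∞ := ENNReal.ofReal p with hq_def
  have hq1 : 1 ≤ q := ENNReal.one_le_ofReal.2 hp1
  have hq2 : q ≤ 2 := by
    have h2 : (2:ℝ≥0∞) = ENNReal.ofReal 2 := by norm_num
    rw [hq_def, h2]
    exact ENNReal.ofReal_le_ofReal hp2.le
  set P : Measure (Fin n → ℝ) := Measure.pi fun _ : Fin n => unif with hP_def
  -- transfer the laws to the coupling space
  have hidν := law_transfer ν ξ hmξ hξindep hξlaw n t a
  have hidlam := law_transfer lam ξ' hmξ' hξ'indep hξ'law n t a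
  rw [hidν.eLpNorm_eq q, hidlam.eLpNorm_eq q]
  set fν : (Fin n → ℝ) → ℝ := fun v => t + ∑ i : Fin n, a (i:ℕ) * mq ν (v i) with hfν_def
  set flam : (Fin n → ℝ) → ℝ := fun v => t + ∑ i : Fin n, a (i:ℕ) * mq lam (v i) with hflam_def
  -- L² facts for the quantile functions
  have hQν2 : MemLp (mq ν) 2 unif := by
    have hid2 : MemLp (fun x : ℝ => x) 2 ν :=
      (memLp_two_iff_integrable_sq aestronglyMeasurable_id).2 hν2
    have hid2' : MemLp (fun x : ℝ => x) 2 (Measure.map (mq ν) unif) := by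
      rw [map_mq]; exact hid2
    exact (memLp_map_measure_iff hid2'.1 (measurable_mq ν).aemeasurable).1 hid2'
  have hQlam2 : MemLp (mq lam) 2 unif := by
    have hid2 : MemLp (fun x : ℝ => x) 2 lam :=
      (memLp_two_iff_integrable_sq aestronglyMeasurable_id).2 hlam2
    have hid2' : MemLp (fun x : ℝ => x) 2 (Measure.map (mq lam) unif) := by
      rw [map_mq]; exact hid2
    exact (memLp_map_measure_iff hid2'.1 (measurable_mq lam).aemeasurable).1 hid2'
  have h0ν : ∫ x, mq ν x ∂unif = 0 := by
    have h := integral_map (f := fun x : ℝ => x) (measurable_mq ν).aemeasurable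
      (by rw [map_mq]; exact aestronglyMeasurable_id)
    rw [map_mq] at h
    rw [← h]
    exact hν0
  have h0lam : ∫ x, mq lam x ∂unif = 0 := by
    have h := integral_map (f := fun x : ℝ => x) (measurable_mq lam).aemeasurable
      (by rw [map_mq]; exact aestronglyMeasurable_id)
    rw [map_mq] at h
    rw [← h]
    exact hlam0
  -- the difference of the quantile couplings
  set δ : ℝ → ℝ := fun x => mq ν x - mq lam x with hδ_def
  have hδm : Measurable δ := (measurable_mq ν).sub (measurable_mq lam)
  have hδ2 : MemLp δ 2 unif := hQν2.sub hQlam2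
  have h0δ : ∫ x, δ x ∂unif = 0 := by
    rw [hδ_def]
    rw [integral_sub (hQν2.integrable one_le_two) (hQlam2.integrable one_le_two), h0ν, h0lam,
      sub_zero]
  set X : Fin n → (Fin n → ℝ) → ℝ := fun i v => a (i:ℕ) * δ (v i) with hX_def
  set D : (Fin n → ℝ) → ℝ := fun v => ∑ i : Fin n, X i v with hD_def
  have hXmem : ∀ i, MemLp (X i) 2 P := fun i => (memℒp_eval_pi unif i hδ2).const_mul _
  have hX0 : ∀ i, ∫ v, X i v ∂P = 0 := by
    intro i
    rw [hX_def]
    simp only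
    rw [integral_const_mul, integral_eval_pi unif i hδm, h0δ, mul_zero]
  have hDmem2 : MemLp D 2 P := memLp_finset_sum Finset.univ (fun i _ => hXmem i)
  have hD0 : ∫ v, D v ∂P = 0 := by
    rw [hD_def]
    simp only
    rw [integral_finset_sum Finset.univ (fun i _ => (hXmem i).integrable one_le_two)]
    exact Finset.sum_eq_zero fun i _ => hX0 i
  -- MemLp of the two functions
  have hSν2 : MemLp (fun v : Fin n → ℝ => ∑ i : Fin n, a (i:ℕ) * mq ν (v i)) 2 P :=
    memLp_finset_sum Finset.univ (fun i _ => (memℒp_eval_pi unif i hQν2).const_mul _)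
  have hSlam2 : MemLp (fun v : Fin n → ℝ => ∑ i : Fin n, a (i:ℕ) * mq lam (v i)) 2 P :=
    memLp_finset_sum Finset.univ (fun i _ => (memℒp_eval_pi unif i hQlam2).const_mul _)
  have hfν2 : MemLp fν 2 P := (memLp_const t).add hSν2
  have hflam2 : MemLp flam 2 P := (memLp_const t).add hSlam2
  have hfνq : MemLp fν q P := hfν2.mono_exponent hq2
  have hflamq : MemLp flam q P := hflam2.mono_exponent hq2
  have hsub : (fun v => fν v - flam v) = D := by
    funext v
    rw [hfν_def, hflam_def, hD_def]
    simp only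
    rw [add_sub_add_left_eq_sub, ← Finset.sum_sub_distrib]
    exact Finset.sum_congr rfl fun i _ => (mul_sub _ _ _).symm
  -- variance computation
  have hDfun : (∑ i : Fin n, X i) = D := funext fun v => Finset.sum_apply v Finset.univ X
  have hXind2 : iIndepFun X P :=
    (iIndepFun_eval unif).comp (fun i x => a (i:ℕ) * δ x)
      (fun i => hδm.const_mul _)
  have hvar : variance (∑ i : Fin n, X i) P = ∑ i : Fin n, variance (X i) P :=
    IndepFun.variance_sum (fun i _ => hXmem i)
      (fun i _ j _ hij => hXind2.indepFun hij)
  have hvarX : ∀ i : Fin n, variance (X i) P = a (i:ℕ) ^ 2 * ∫ x, δ x ^ 2 ∂unif := by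
    intro i
    rw [variance_of_integral_eq_zero (hXmem i).aemeasurable (hX0 i)]; change ∫ v, (X i ^ (2:ℕ)) v ∂P = _
    have hXsq : (X i ^ (2:ℕ)) = fun v : Fin n → ℝ => a (i:ℕ) ^ 2 * δ (v i) ^ 2 := by
      funext v
      rw [hX_def]
      simp [mul_pow]
    rw [hXsq, integral_const_mul, integral_eval_pi unif i (hδm.pow_const 2)]
  have hvarD : variance D P = (∑ i : Fin n, a (i:ℕ) ^ 2) * ∫ x, δ x ^ 2 ∂unif := by
    rw [← hDfun, hvar]
    calc ∑ i : Fin n, variance (X i) P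
        = ∑ i : Fin n, a (i:ℕ) ^ 2 * ∫ x, δ x ^ 2 ∂unif :=
          Finset.sum_congr rfl fun i _ => hvarX i
      _ = (∑ i : Fin n, a (i:ℕ) ^ 2) * ∫ x, δ x ^ 2 ∂unif := (Finset.sum_mul _ _ _).symm
  have hC : ∫ x, δ x ^ 2 ∂unif
      = ∫ x in Set.Ioo (0:ℝ) 1, (quantile ν x - quantile lam x) ^ 2 := by
    rw [unif_def]
    refine setIntegral_congr_fun measurableSet_Ioo fun x hx => ?_
    rw [hδ_def]
    simp only
    rw [mq, mq, indicator_of_mem hx, indicator_of_mem hx]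
  -- final chain
  calc |(eLpNorm fν q P).toReal - (eLpNorm flam q P).toReal|
      ≤ (eLpNorm (fun v => fν v - flam v) q P).toReal :=
        abs_toReal_eLpNorm_sub_le hq1 hfνq hflamq
    _ = (eLpNorm D q P).toReal := by rw [hsub]
    _ ≤ (eLpNorm D 2 P).toReal :=
        ENNReal.toReal_mono hDmem2.2.ne (eLpNorm_le_eLpNorm_of_exponent_le hq2 hDmem2.1)
    _ = Real.sqrt (variance D P) := toReal_eLpNorm_two_eq hD0
    _ = Real.sqrt ((∑ i : Fin n, a (i:ℕ) ^ 2) * ∫ x, δ x ^ 2 ∂unif) := by rw [hvarD]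
    _ = Real.sqrt (∑ i : Fin n, a (i:ℕ) ^ 2) * Real.sqrt (∫ x, δ x ^ 2 ∂unif) :=
        Real.sqrt_mul (Finset.sum_nonneg fun i _ => sq_nonneg _) _
    _ = qdist ν lam * Real.sqrt (∑ k ∈ Finset.range n, (a k) ^ 2) := by
        rw [hC, Fin.sum_univ_eq_sum_range (fun k => a k ^ 2) n, mul_comm]
        rfl
end
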